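/- Let Γ be a graph that is a disjoint union Γ = Γ_1 ⊔ Γ_2, and let S be an initial configuration of n vertices with p particles in Γ_1 and q = n − p particles in Γ_2. Then the graph braid group B_n(Γ, S) is isomorphic to the direct product B_p(Γ_1, S ∩ Γ_1) × B_q(Γ_2, S ∩ Γ_2). -/

import Mathlib

open CategoryTheory Topology

/-- Ordered configurations of `n` pairwise-distinct points of a topological space. -/
def OrdConf (X : Type*) (n : ℕ) : Type _ := {f : Fin n → X // Function.Injective f}

instance (X : Type*) [TopologicalSpace X] (n : ℕ) : TopologicalSpace (OrdConf X n) :=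
  inferInstanceAs (TopologicalSpace {f : Fin n → X // Function.Injective f})

/-- The permutation-action setoid on ordered configurations. -/
def confSetoid (X : Type*) (n : ℕ) : Setoid (OrdConf X n) where
  r f g := ∃ σ : Equiv.Perm (Fin n), ∀ i, f.1 (σ i) = g.1 i
  iseqv := by
    constructor
    · exact fun f => ⟨1, fun i => rfl⟩
    · rintro f g ⟨σ, h⟩
      exact ⟨σ⁻¹, fun i => by rw [← h (σ⁻¹ i), Equiv.Perm.inv_def, Equiv.apply_symm_apply]⟩
    · rintro f g h ⟨σ, hfg⟩ ⟨τ, hgh⟩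
      exact ⟨τ.trans σ, fun i => by rw [Equiv.trans_apply, hfg (τ i), hgh i]⟩

/-- The unordered configuration space `UC_n(X)` with the quotient topology. -/
@[reducible] def UConf (X : Type*) [TopologicalSpace X] (n : ℕ) : Type _ := Quotient (confSetoid X n)

instance (X : Type*) [TopologicalSpace X] (n : ℕ) : TopologicalSpace (UConf X n) :=
  inferInstanceAs (TopologicalSpace (Quotient (confSetoid X n)))

/-- The braid group `B_n(X, S)`: the fundamental group of the unordered configuration
space of `n` points of `X` based at the configuration `S`. -/
def BraidGroupTop (X : Type*) [TopologicalSpace X] (n : ℕ) (S : UConf X n) :=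
  FundamentalGroup (UConf X n) S

noncomputable instance (X : Type*) [TopologicalSpace X] (n : ℕ) (S : UConf X n) :
    Group (BraidGroupTop X n S) :=
  inferInstanceAs (Group (FundamentalGroup (UConf X n) S))



/-- Transfer `Aut` along a functor that is bijective on the relevant endo-homs. -/
noncomputable def autEquivOfBijMap {C D : Type*} [Category C] [Category D] (F : C ⥤ D) (a : C)
    (h : Function.Bijective fun p : a ⟶ a => F.map p) : Aut a ≃* Aut (F.obj a) := by
  refine MulEquiv.ofBijective (F.mapAut a) ⟨?_, ?_⟩
  · intro u v huv
    exact Iso.ext (h.1 (congrArg Iso.hom huv))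
  · intro v
    obtain ⟨x, hx⟩ := h.2 v.hom
    obtain ⟨y, hy⟩ := h.2 v.inv
    refine ⟨⟨x, y, ?_, ?_⟩, Iso.ext hx⟩
    · apply h.1
      simp only [F.map_comp, hx, hy, Iso.hom_inv_id, F.map_id]
      exact v.hom_inv_id
    · apply h.1
      simp only [F.map_comp, hx, hy, Iso.inv_hom_id, F.map_id]
      exact v.inv_hom_id

/-- `Aut` of a pair in a product category. -/
def autProdEquiv {C D : Type*} [Category C] [Category D] (a : C) (b : D) :
    Aut ((a, b) : C × D) ≃* Aut a × Aut b where
  toFun u := (⟨u.hom.1, u.inv.1, congrArg Prod.fst u.hom_inv_id, congrArg Prod.fst u.inv_hom_id⟩,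
              ⟨u.hom.2, u.inv.2, congrArg Prod.snd u.hom_inv_id, congrArg Prod.snd u.inv_hom_id⟩)
  invFun v := ⟨(v.1.hom, v.2.hom), (v.1.inv, v.2.inv),
      Prod.ext v.1.hom_inv_id v.2.hom_inv_id, Prod.ext v.1.inv_hom_id v.2.inv_hom_id⟩
  left_inv u := rfl
  right_inv v := rfl
  map_mul' u v := rfl

/-- In a groupoid, `End` and `Aut` agree as groups. -/
noncomputable def endAutEquiv {G : Type*} [Groupoid G] (a : G) : End a ≃* Aut a :=
  toUnits.trans (Aut.unitsEndEquivAut a)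

/-- Transfer `Aut` along an equality of objects. -/
def autCongr {C : Type*} [Category C] {a b : C} (h : a = b) : Aut a ≃* Aut b :=
  Aut.autMulEquivOfIso (eqToIso h)

/-- Homotopic paths stay homotopic after a `Path.cast`. -/
theorem homotopic_cast {X : Type*} [TopologicalSpace X] {a b a' b' : X}
    (ha : a' = a) (hb : b' = b) {p q : Path a b} (hpq : Path.Homotopic p q) :
    Path.Homotopic (p.cast ha hb) (q.cast ha hb) := by
  subst ha; subst hb
  have e1 : p.cast rfl rfl = p := by ext t; rfl
  have e2 : q.cast rfl rfl = q := by ext t; rfl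
  rwa [e1, e2]

open FundamentalGroupoid in
/-- A homeomorphism induces an isomorphism of fundamental groups. -/
noncomputable def fgHomeo {X Y : Type} [TopologicalSpace X] [TopologicalSpace Y]
    (h : X ≃ₜ Y) (x : X) : FundamentalGroup X x ≃* FundamentalGroup Y (h x) := by
  refine (endAutEquiv (FundamentalGroupoid.mk x)).trans ((autEquivOfBijMap
    (show FundamentalGroupoid X ⥤ FundamentalGroupoid Y from
      πₘ (show TopCat.of X ⟶ TopCat.of Y from TopCat.ofHom (h : C(X, Y)))) ⟨x⟩ ?_).trans
    (endAutEquiv (FundamentalGroupoid.mk (h x))).symm)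
  show Function.Bijective fun p : Path.Homotopic.Quotient x x =>
    Path.Homotopic.Quotient.map p (h : C(X, Y))
  rw [Function.bijective_iff_has_inverse]
  refine ⟨Quotient.map (fun γ : Path (h x) (h x) =>
      (γ.map h.symm.continuous).cast (h.symm_apply_apply x).symm (h.symm_apply_apply x).symm)
      (fun _ _ hpq => homotopic_cast _ _ (Path.Homotopic.map hpq
        (⟨_, h.symm.continuous⟩ : C(Y, X)))), ?_, ?_⟩
  · intro u
    induction u using Quotient.inductionOn with
    | h γ =>
      have h3 : ((γ.map h.continuous).map h.symm.continuous).cast (h.symm_apply_apply x).symm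
          (h.symm_apply_apply x).symm = γ := by
        ext t
        exact h.symm_apply_apply (γ t)
      show (⟦((γ.map h.continuous).map h.symm.continuous).cast (h.symm_apply_apply x).symm
          (h.symm_apply_apply x).symm⟧ : Path.Homotopic.Quotient x x) = ⟦γ⟧
      exact congrArg (Quotient.mk _) h3
  · intro u
    induction u using Quotient.inductionOn with
    | h γ =>
      have h3 : (((γ.map h.symm.continuous).cast (h.symm_apply_apply x).symm
          (h.symm_apply_apply x).symm).map h.continuous) = γ := by
        ext t
        exact h.apply_symm_apply (γ t)
      show (⟦((γ.map h.symm.continuous).cast (h.symm_apply_apply x).symm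
          (h.symm_apply_apply x).symm).map h.continuous⟧
            : Path.Homotopic.Quotient (h x) (h x)) = ⟦γ⟧
      exact congrArg (Quotient.mk _) h3

section Clopen

variable {X : Type} [TopologicalSpace X] {Cs : Set X}

theorem path_mem_clopen (hC : IsClopen Cs) {a b : X} (γ : Path a b) (ha : a ∈ Cs) (t : unitInterval) :
    γ t ∈ Cs := by
  have hclop : IsClopen ((γ : unitInterval → X) ⁻¹' Cs) := hC.preimage γ.continuous
  have huniv : (γ : unitInterval → X) ⁻¹' Cs = Set.univ :=
    hclop.eq_univ ⟨0, by show γ 0 ∈ Cs; rw [γ.source]; exact ha⟩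
  have : t ∈ (γ : unitInterval → X) ⁻¹' Cs := huniv ▸ Set.mem_univ t
  exact this

/-- Lift a path into a clopen set. -/
def liftPath (hC : IsClopen Cs) {a b : X} (γ : Path a b) (ha : a ∈ Cs) (hb : b ∈ Cs) :
    Path (⟨a, ha⟩ : Cs) ⟨b, hb⟩ where
  toFun t := ⟨γ t, path_mem_clopen hC γ ha t⟩
  continuous_toFun := γ.continuous.subtype_mk _
  source' := Subtype.ext γ.source
  target' := Subtype.ext γ.target

theorem homotopy_mem_clopen (hC : IsClopen Cs) {a b : X} {γ γ' : Path a b}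
    (H : Path.Homotopy γ γ') (ha : a ∈ Cs) (st : unitInterval × unitInterval) : H st ∈ Cs := by
  have hclop : IsClopen ((H : unitInterval × unitInterval → X) ⁻¹' Cs) := hC.preimage H.continuous
  have huniv : (H : unitInterval × unitInterval → X) ⁻¹' Cs = Set.univ := by
    refine hclop.eq_univ ⟨(0, 0), ?_⟩
    show H (0, 0) ∈ Cs
    rw [H.apply_zero]
    show γ 0 ∈ Cs
    rw [γ.source]
    exact ha
  have : st ∈ (H : unitInterval × unitInterval → X) ⁻¹' Cs := huniv ▸ Set.mem_univ st
  exact this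

/-- Lift a path homotopy into a clopen set. -/
def liftHomotopy (hC : IsClopen Cs) {a b : X} {γ γ' : Path a b}
    (H : Path.Homotopy γ γ') (ha : a ∈ Cs) (hb : b ∈ Cs) :
    Path.Homotopy (liftPath hC γ ha hb) (liftPath hC γ' ha hb) where
  toFun st := ⟨H st, homotopy_mem_clopen hC H ha st⟩
  continuous_toFun := H.continuous.subtype_mk _
  map_zero_left t := Subtype.ext (H.apply_zero t)
  map_one_left t := Subtype.ext (H.apply_one t)
  prop' t s hs := Subtype.ext (H.prop' t s hs)

open FundamentalGroupoid in
/-- The inclusion of a clopen subset induces an isomorphism of fundamental groups. -/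
noncomputable def fgClopen (hC : IsClopen Cs) {x : X} (hx : x ∈ Cs) :
    FundamentalGroup Cs ⟨x, hx⟩ ≃* FundamentalGroup X x := by
  refine (endAutEquiv (FundamentalGroupoid.mk (⟨x, hx⟩ : Cs))).trans ((autEquivOfBijMap
    (show FundamentalGroupoid Cs ⥤ FundamentalGroupoid X from
      πₘ (show TopCat.of Cs ⟶ TopCat.of X from TopCat.ofHom ⟨_, continuous_subtype_val⟩))
      ⟨(⟨x, hx⟩ : Cs)⟩ ?_).trans (endAutEquiv (FundamentalGroupoid.mk x)).symm)
  show Function.Bijective fun p : Path.Homotopic.Quotient (⟨x, hx⟩ : Cs) ⟨x, hx⟩ =>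
    Path.Homotopic.Quotient.map p ⟨_, continuous_subtype_val⟩
  rw [Function.bijective_iff_has_inverse]
  refine ⟨Quotient.map (fun γ : Path x x => liftPath hC γ hx hx)
      (fun γ γ' hγ => ⟨liftHomotopy hC hγ.some hx hx⟩), ?_, ?_⟩
  · intro u
    induction u using Quotient.inductionOn with
    | h γ =>
      have h3 : liftPath hC (γ.map continuous_subtype_val) hx hx = γ := by
        ext t
        rfl
      show (⟦liftPath hC (γ.map continuous_subtype_val) hx hx⟧ :
        Path.Homotopic.Quotient (⟨x, hx⟩ : Cs) ⟨x, hx⟩) = ⟦γ⟧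
      exact congrArg (Quotient.mk _) h3
  · intro u
    induction u using Quotient.inductionOn with
    | h γ =>
      have h3 : (liftPath hC γ hx hx).map continuous_subtype_val = γ := by
        ext t
        rfl
      show (⟦(liftPath hC γ hx hx).map continuous_subtype_val⟧ :
        Path.Homotopic.Quotient x x) = ⟦γ⟧
      exact congrArg (Quotient.mk _) h3

end Clopen

open FundamentalGroupoid FundamentalGroupoidFunctor in
/-- Fundamental group of a product space. -/
noncomputable def fgProd (A B : Type) [TopologicalSpace A] [TopologicalSpace B] (a : A) (b : B) :
    FundamentalGroup (A × B) (a, b) ≃* FundamentalGroup A a × FundamentalGroup B b := by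
  have bij : Function.Bijective fun pq : (((⟨a⟩, ⟨b⟩) :
        FundamentalGroupoid A × FundamentalGroupoid B)) ⟶ (⟨a⟩, ⟨b⟩) =>
      (prodToProdTop (TopCat.of A) (TopCat.of B)).map pq := by
    constructor
    · rintro ⟨u1, u2⟩ ⟨v1, v2⟩ huv
      have h1 := congrArg Path.Homotopic.projLeft huv
      have h2 := congrArg Path.Homotopic.projRight huv
      beta_reduce at h1 h2
      erw [prodToProdTop_map, prodToProdTop_map] at h1 h2
      erw [Path.Homotopic.projLeft_prod, Path.Homotopic.projLeft_prod] at h1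
      erw [Path.Homotopic.projRight_prod, Path.Homotopic.projRight_prod] at h2
      simp only [Path.Homotopic.projLeft_prod, Path.Homotopic.projRight_prod] at h1 h2
      exact Prod.ext h1 h2
    · intro d
      refine ⟨(Path.Homotopic.projLeft d, Path.Homotopic.projRight d), ?_⟩
      beta_reduce
      erw [prodToProdTop_map]
      exact Path.Homotopic.prod_projLeft_projRight d
  exact (endAutEquiv (FundamentalGroupoid.mk (a, b))).trans
    ((((autEquivOfBijMap
      (show FundamentalGroupoid A × FundamentalGroupoid B ⥤ FundamentalGroupoid (A × B) from
        prodToProdTop (TopCat.of A) (TopCat.of B)) (⟨a⟩, ⟨b⟩) bij).symm).trans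
    (autProdEquiv _ _)).trans (MulEquiv.prodCongr (endAutEquiv (FundamentalGroupoid.mk a)).symm
      (endAutEquiv (FundamentalGroupoid.mk b)).symm))

section Conf

variable {X Y : Type} [TopologicalSpace X] [TopologicalSpace Y] {n p q : ℕ}

/-- Abbreviation for the quotient map. -/
abbrev mkU {X : Type} [TopologicalSpace X] {n : ℕ} (f : OrdConf X n) : UConf X n :=
  Quotient.mk (confSetoid X n) f

theorem mkU_quot : IsQuotientMap (mkU (X := X) (n := n)) :=
  isQuotientMap_quotient_mk'

theorem contPerm (σ : Equiv.Perm (Fin n)) :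
    Continuous (fun f : OrdConf X n => (⟨f.1 ∘ σ, f.2.comp σ.injective⟩ : OrdConf X n)) := by
  refine Continuous.subtype_mk ?_ _
  refine continuous_pi fun i => ?_
  show Continuous fun f : OrdConf X n => f.1 (σ i)
  exact (continuous_apply (σ i)).comp continuous_subtype_val

/-- Precomposition with a permutation, as a homeomorphism of ordered configurations. -/
def permHomeo (σ : Equiv.Perm (Fin n)) : OrdConf X n ≃ₜ OrdConf X n where
  toFun f := ⟨f.1 ∘ σ, f.2.comp σ.injective⟩
  invFun f := ⟨f.1 ∘ σ.symm, f.2.comp σ.symm.injective⟩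
  left_inv f := Subtype.ext (funext fun i => by simp)
  right_inv f := Subtype.ext (funext fun i => by simp)
  continuous_toFun := contPerm σ
  continuous_invFun := contPerm σ.symm

theorem mkU_eq_iff {f g : OrdConf X n} :
    mkU f = mkU g ↔ ∃ σ : Equiv.Perm (Fin n), ∀ i, f.1 (σ i) = g.1 i := by
  constructor
  · exact fun h => Quotient.exact h
  · exact fun h => Quotient.sound h

theorem mkU_open : IsOpenMap (mkU (X := X) (n := n)) := by
  intro U hU
  rw [← mkU_quot.isOpen_preimage]
  have : mkU ⁻¹' (mkU '' U) = ⋃ σ : Equiv.Perm (Fin n), permHomeo σ '' U := by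
    ext g
    simp only [Set.mem_preimage, Set.mem_image, Set.mem_iUnion]
    constructor
    · rintro ⟨u, hu, hug⟩
      obtain ⟨σ, hσ⟩ := mkU_eq_iff.mp hug
      exact ⟨σ, u, hu, Subtype.ext (funext fun i => hσ i)⟩
    · rintro ⟨σ, u, hu, rfl⟩
      refine ⟨u, hu, mkU_eq_iff.mpr ⟨σ, fun i => ?_⟩⟩
      show u.1 (σ i) = u.1 (σ i)
      rfl
  rw [this]
  exact isOpen_iUnion fun σ => (permHomeo σ).isOpenMap U hU

/-- The number of particles lying in the left factor. -/
def leftCount (f : OrdConf (X ⊕ Y) n) : ℕ :=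
  Fintype.card {i : Fin n // (f.1 i).isLeft = true}

theorem continuous_beta :
    Continuous (fun f : OrdConf (X ⊕ Y) n => fun i => (f.1 i).isLeft) :=
  continuous_pi fun i => continuous_isLeft.comp
    ((continuous_apply i).comp continuous_subtype_val)

theorem isClopen_D : IsClopen {f : OrdConf (X ⊕ Y) n | leftCount f = p} := by
  have : {f : OrdConf (X ⊕ Y) n | leftCount f = p} =
      (fun f : OrdConf (X ⊕ Y) n => fun i => (f.1 i).isLeft) ⁻¹'
        {b : Fin n → Bool | Fintype.card {i // b i = true} = p} := rfl
  rw [this]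
  exact (isClopen_discrete _).preimage continuous_beta

theorem leftCount_of_rel {f g : OrdConf (X ⊕ Y) n}
    (h : ∃ σ : Equiv.Perm (Fin n), ∀ i, f.1 (σ i) = g.1 i) : leftCount f = leftCount g := by
  obtain ⟨σ, hσ⟩ := h
  exact (Fintype.card_congr (Equiv.subtypeEquiv σ fun i => by rw [hσ i])).symm

theorem preimage_Cset :
    mkU ⁻¹' (mkU '' {f : OrdConf (X ⊕ Y) n | leftCount f = p}) =
      {f : OrdConf (X ⊕ Y) n | leftCount f = p} := by
  ext g
  simp only [Set.mem_preimage, Set.mem_image, Set.mem_setOf_eq]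
  constructor
  · rintro ⟨u, hu, hug⟩
    obtain ⟨σ, hσ⟩ := mkU_eq_iff.mp hug
    rw [← hu]
    exact (leftCount_of_rel ⟨σ, hσ⟩).symm
  · intro hg
    exact ⟨g, hg, rfl⟩

theorem isClopen_Cset :
    IsClopen (mkU '' {f : OrdConf (X ⊕ Y) n | leftCount f = p}) := by
  constructor
  · rw [← isOpen_compl_iff, ← mkU_quot.isOpen_preimage, Set.preimage_compl, preimage_Cset]
    exact (isClopen_D (p := p)).isClosed.isOpen_compl
  · rw [← mkU_quot.isOpen_preimage, preimage_Cset]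
    exact (isClopen_D (p := p)).isOpen

noncomputable def glHomeo : X ≃ₜ Set.range (Sum.inl : X → X ⊕ Y) :=
  IsOpenEmbedding.inl.toIsEmbedding.toHomeomorph

noncomputable def grHomeo : Y ≃ₜ Set.range (Sum.inr : Y → X ⊕ Y) :=
  IsOpenEmbedding.inr.toIsEmbedding.toHomeomorph

theorem inl_glHomeo_symm (z : X ⊕ Y) (hz : z ∈ Set.range (Sum.inl : X → X ⊕ Y)) :
    Sum.inl ((glHomeo (Y := Y)).symm ⟨z, hz⟩) = z := by
  have h := (glHomeo (X := X) (Y := Y)).apply_symm_apply ⟨z, hz⟩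
  exact congrArg Subtype.val h

theorem inr_grHomeo_symm (z : X ⊕ Y) (hz : z ∈ Set.range (Sum.inr : Y → X ⊕ Y)) :
    Sum.inr ((grHomeo (X := X)).symm ⟨z, hz⟩) = z := by
  have h := (grHomeo (X := X) (Y := Y)).apply_symm_apply ⟨z, hz⟩
  exact congrArg Subtype.val h

theorem mem_range_inl_of_isLeft {z : X ⊕ Y} (h : z.isLeft = true) :
    z ∈ Set.range (Sum.inl : X → X ⊕ Y) := by
  cases z with
  | inl x => exact ⟨x, rfl⟩
  | inr y => simp at h

theorem mem_range_inr_of_isLeft_false {z : X ⊕ Y} (h : z.isLeft = false) :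
    z ∈ Set.range (Sum.inr : Y → X ⊕ Y) := by
  cases z with
  | inl x => simp at h
  | inr y => exact ⟨y, rfl⟩

variable (e : Fin n ≃ Fin p ⊕ Fin q)

/-- Join two ordered configurations into one on the disjoint union. -/
def joinConf (g₁ : OrdConf X p) (g₂ : OrdConf Y q) : OrdConf (X ⊕ Y) n :=
  ⟨fun i => Sum.map g₁.1 g₂.1 (e i), by
    intro i j hij
    have hij' : Sum.map g₁.1 g₂.1 (e i) = Sum.map g₁.1 g₂.1 (e j) := hij
    apply e.injective
    rcases hi : e i with a | a <;> rcases hj : e j with b | b <;>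
      rw [hi, hj] at hij' <;> simp at hij'
    · exact congrArg Sum.inl (g₁.2 hij')
    · exact congrArg Sum.inr (g₂.2 hij')⟩

/-- The set of configurations whose left/right pattern agrees with `e`. -/
def patternSet : Set (OrdConf (X ⊕ Y) n) :=
  {F | ∀ i, (F.1 i).isLeft = (e i).isLeft}

theorem isOpen_patternSet : IsOpen (patternSet (X := X) (Y := Y) e) := by
  have : patternSet (X := X) (Y := Y) e =
      (fun f : OrdConf (X ⊕ Y) n => fun i => (f.1 i).isLeft) ⁻¹'
        {b : Fin n → Bool | ∀ i, b i = (e i).isLeft} := rfl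
  rw [this]
  exact ((isClopen_discrete _).preimage continuous_beta).isOpen

theorem joinConf_mem_patternSet (g₁ : OrdConf X p) (g₂ : OrdConf Y q) :
    joinConf e g₁ g₂ ∈ patternSet e := by
  intro i
  rcases hi : e i with a | a <;> simp [joinConf, hi]

/-- Joining is a homeomorphism onto the pattern set. -/
noncomputable def joinHomeo : OrdConf X p × OrdConf Y q ≃ₜ patternSet (X := X) (Y := Y) e where
  toFun gg := ⟨joinConf e gg.1 gg.2, joinConf_mem_patternSet e gg.1 gg.2⟩
  invFun F :=
    (⟨fun k => (glHomeo (Y := Y)).symm ⟨F.1.1 (e.symm (Sum.inl k)), by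
        refine mem_range_inl_of_isLeft ?_
        rw [F.2 (e.symm (Sum.inl k)), e.apply_symm_apply]
        rfl⟩, by
      intro k k' hkk
      have h2 := congrArg (Sum.inl (β := Y)) hkk
      rw [inl_glHomeo_symm, inl_glHomeo_symm] at h2
      have h3 := F.1.2 h2
      have h4 := e.symm.injective h3
      exact Sum.inl_injective h4⟩,
     ⟨fun k => (grHomeo (X := X)).symm ⟨F.1.1 (e.symm (Sum.inr k)), by
        refine mem_range_inr_of_isLeft_false ?_
        rw [F.2 (e.symm (Sum.inr k)), e.apply_symm_apply]
        rfl⟩, by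
      intro k k' hkk
      have h2 := congrArg (Sum.inr (α := X)) hkk
      rw [inr_grHomeo_symm, inr_grHomeo_symm] at h2
      have h3 := F.1.2 h2
      have h4 := e.symm.injective h3
      exact Sum.inr_injective h4⟩)
  left_inv gg := by
    ext1 <;> refine Subtype.ext (funext fun k => ?_)
    · apply Sum.inl_injective (β := Y)
      rw [inl_glHomeo_symm]
      show Sum.map gg.1.1 gg.2.1 (e (e.symm (Sum.inl k))) = _
      rw [e.apply_symm_apply]
      rfl
    · apply Sum.inr_injective (α := X)
      rw [inr_grHomeo_symm]
      show Sum.map gg.1.1 gg.2.1 (e (e.symm (Sum.inr k))) = _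
      rw [e.apply_symm_apply]
      rfl
  right_inv F := by
    refine Subtype.ext (Subtype.ext (funext fun i => ?_))
    show Sum.map _ _ (e i) = F.1.1 i
    rcases hi : e i with a | a
    · rw [Sum.map_inl]
      have hi' : e.symm (Sum.inl a) = i := by rw [← hi, e.symm_apply_apply]
      show Sum.inl ((glHomeo (Y := Y)).symm ⟨F.1.1 (e.symm (Sum.inl a)), _⟩) = F.1.1 i
      rw [inl_glHomeo_symm]
      exact congrArg _ hi'
    · rw [Sum.map_inr]
      have hi' : e.symm (Sum.inr a) = i := by rw [← hi, e.symm_apply_apply]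
      show Sum.inr ((grHomeo (X := X)).symm ⟨F.1.1 (e.symm (Sum.inr a)), _⟩) = F.1.1 i
      rw [inr_grHomeo_symm]
      exact congrArg _ hi'
  continuous_toFun := by
    refine Continuous.subtype_mk (Continuous.subtype_mk ?_ _) _
    refine continuous_pi fun i => ?_
    show Continuous fun gg : OrdConf X p × OrdConf Y q => Sum.map gg.1.1 gg.2.1 (e i)
    rcases hi : e i with a | a
    · show Continuous fun gg : OrdConf X p × OrdConf Y q => Sum.inl (gg.1.1 a)
      exact continuous_inl.comp ((continuous_apply a).comp
        (continuous_subtype_val.comp continuous_fst))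
    · show Continuous fun gg : OrdConf X p × OrdConf Y q => Sum.inr (gg.2.1 a)
      exact continuous_inr.comp ((continuous_apply a).comp
        (continuous_subtype_val.comp continuous_snd))
  continuous_invFun := by
    refine Continuous.prodMk ?_ ?_
    · refine Continuous.subtype_mk ?_ _
      refine continuous_pi fun k => ?_
      refine (glHomeo (Y := Y)).symm.continuous.comp ?_
      refine Continuous.subtype_mk ?_ _
      show Continuous fun F : patternSet (X := X) (Y := Y) e => F.1.1 (e.symm (Sum.inl k))
      exact (continuous_apply _).comp (continuous_subtype_val.comp continuous_subtype_val)
    · refine Continuous.subtype_mk ?_ _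
      refine continuous_pi fun k => ?_
      refine (grHomeo (X := X)).symm.continuous.comp ?_
      refine Continuous.subtype_mk ?_ _
      show Continuous fun F : patternSet (X := X) (Y := Y) e => F.1.1 (e.symm (Sum.inr k))
      exact (continuous_apply _).comp (continuous_subtype_val.comp continuous_subtype_val)

theorem inl_getLeft {α β : Type*} {z : α ⊕ β} (h : z.isLeft) :
    Sum.inl (z.getLeft h) = z := by
  cases z with
  | inl x => rfl
  | inr y => simp at h

theorem inr_getRight {α β : Type*} {z : α ⊕ β} (h : z.isRight) :
    Sum.inr (z.getRight h) = z := by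
  cases z with
  | inl x => simp at h
  | inr y => rfl

theorem isRight_of_not_isLeft {α β : Type*} {z : α ⊕ β} (h : ¬ (z.isLeft = true)) :
    z.isRight = true := by
  cases z with
  | inl x => exact absurd rfl h
  | inr y => rfl

/-- Left summand as a subtype. -/
def leftTypeEquiv (α β : Type*) : {s : α ⊕ β // s.isLeft = true} ≃ α where
  toFun s := s.1.getLeft s.2
  invFun a := ⟨Sum.inl a, rfl⟩
  left_inv s := by
    rcases s with ⟨s, hs⟩
    cases s with
    | inl x => rfl
    | inr y => simp at hs
  right_inv a := rfl

theorem leftCount_joinConf (g₁ : OrdConf X p) (g₂ : OrdConf Y q) :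
    leftCount (joinConf e g₁ g₂) = p := by
  have h1 : ∀ i, ((joinConf e g₁ g₂).1 i).isLeft = (e i).isLeft := joinConf_mem_patternSet e g₁ g₂
  have e2 : {i : Fin n // ((joinConf e g₁ g₂).1 i).isLeft = true} ≃
      {s : Fin p ⊕ Fin q // s.isLeft = true} :=
    Equiv.subtypeEquiv e fun i => by rw [h1 i]
  show Fintype.card _ = p
  rw [Fintype.card_congr (e2.trans (leftTypeEquiv _ _)), Fintype.card_fin]

theorem joinConf_mem_Cset (g₁ : OrdConf X p) (g₂ : OrdConf Y q) :
    mkU (joinConf e g₁ g₂) ∈ mkU '' {h : OrdConf (X ⊕ Y) n | leftCount h = p} :=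
  ⟨joinConf e g₁ g₂, leftCount_joinConf e g₁ g₂, rfl⟩

/-- The map from the product of unordered configuration spaces to the clopen piece. -/
noncomputable def psi :
    UConf X p × UConf Y q → ↥(mkU '' {h : OrdConf (X ⊕ Y) n | leftCount h = p}) := fun cc =>
  Quotient.lift₂
    (fun g₁ g₂ => (⟨mkU (joinConf e g₁ g₂), joinConf_mem_Cset e g₁ g₂⟩ :
      ↥(mkU '' {h : OrdConf (X ⊕ Y) n | leftCount h = p})))
    (by
      rintro g₁ g₂ g₁' g₂' ⟨σ₁, hσ₁⟩ ⟨σ₂, hσ₂⟩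
      refine Subtype.ext (mkU_eq_iff.mpr ⟨e.trans ((σ₁.sumCongr σ₂).trans e.symm), fun i => ?_⟩)
      show Sum.map g₁.1 g₂.1 (e (e.symm ((σ₁.sumCongr σ₂) (e i)))) = Sum.map g₁'.1 g₂'.1 (e i)
      rw [e.apply_symm_apply]
      rcases hi : e i with k | k
      · simp only [Equiv.sumCongr_apply, Sum.map_inl]
        exact congrArg Sum.inl (hσ₁ k)
      · simp only [Equiv.sumCongr_apply, Sum.map_inr]
        exact congrArg Sum.inr (hσ₂ k))
    cc.1 cc.2

theorem qprodQuot : IsQuotientMap (Prod.map (mkU (X := X) (n := p)) (mkU (X := Y) (n := q))) := by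
  refine IsOpenMap.isQuotientMap (mkU_open.prodMap mkU_open)
    (mkU_quot.continuous.prodMap mkU_quot.continuous) ?_
  rintro ⟨c₁, c₂⟩
  obtain ⟨g₁, h₁⟩ := Quotient.exists_rep c₁
  obtain ⟨g₂, h₂⟩ := Quotient.exists_rep c₂
  exact ⟨(g₁, g₂), Prod.ext h₁ h₂⟩

theorem psi_cont : Continuous (psi e (X := X) (Y := Y)) := by
  rw [(qprodQuot (X := X) (Y := Y) (p := p) (q := q)).continuous_iff]
  show Continuous fun gg : OrdConf X p × OrdConf Y q =>
    (⟨mkU (joinConf e gg.1 gg.2), joinConf_mem_Cset e gg.1 gg.2⟩ :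
      ↥(mkU '' {h : OrdConf (X ⊕ Y) n | leftCount h = p}))
  refine Continuous.subtype_mk ?_ _
  have : (fun gg : OrdConf X p × OrdConf Y q => mkU (joinConf e gg.1 gg.2)) =
      mkU ∘ Subtype.val ∘ (joinHomeo e) := rfl
  rw [this]
  exact mkU_quot.continuous.comp (continuous_subtype_val.comp (joinHomeo e).continuous)

theorem psi_inj : Function.Injective (psi e (X := X) (Y := Y)) := by
  rintro ⟨c₁, c₂⟩ ⟨c₁', c₂'⟩ hcc
  obtain ⟨g₁, rfl⟩ := Quotient.exists_rep c₁
  obtain ⟨g₂, rfl⟩ := Quotient.exists_rep c₂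
  obtain ⟨g₁', rfl⟩ := Quotient.exists_rep c₁'
  obtain ⟨g₂', rfl⟩ := Quotient.exists_rep c₂'
  have h0 : mkU (joinConf e g₁ g₂) = mkU (joinConf e g₁' g₂') := congrArg Subtype.val hcc
  obtain ⟨π, hπ⟩ := mkU_eq_iff.mp h0
  have key : ∀ i, Sum.map g₁.1 g₂.1 (e (π i)) = Sum.map g₁'.1 g₂'.1 (e i) := hπ
  have hL : ∀ k : Fin p, ∃ t : Fin p, g₁.1 t = g₁'.1 k := by
    intro k
    have h1 := key (e.symm (Sum.inl k))
    rw [e.apply_symm_apply, Sum.map_inl] at h1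
    rcases hs : e (π (e.symm (Sum.inl k))) with t | t
    · rw [hs, Sum.map_inl] at h1
      exact ⟨t, Sum.inl_injective h1⟩
    · rw [hs, Sum.map_inr] at h1
      simp at h1
  have hR : ∀ k : Fin q, ∃ t : Fin q, g₂.1 t = g₂'.1 k := by
    intro k
    have h1 := key (e.symm (Sum.inr k))
    rw [e.apply_symm_apply, Sum.map_inr] at h1
    rcases hs : e (π (e.symm (Sum.inr k))) with t | t
    · rw [hs, Sum.map_inl] at h1
      simp at h1
    · rw [hs, Sum.map_inr] at h1
      exact ⟨t, Sum.inr_injective h1⟩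
  choose T hT using hL
  choose S hS using hR
  have hTinj : Function.Injective T := by
    intro k k' hkk
    apply g₁'.2
    rw [← hT k, ← hT k', hkk]
  have hSinj : Function.Injective S := by
    intro k k' hkk
    apply g₂'.2
    rw [← hS k, ← hS k', hkk]
  refine Prod.ext ?_ ?_
  · exact mkU_eq_iff.mpr ⟨Equiv.ofBijective T (Finite.injective_iff_bijective.mp hTinj),
      fun k => hT k⟩
  · exact mkU_eq_iff.mpr ⟨Equiv.ofBijective S (Finite.injective_iff_bijective.mp hSinj),
      fun k => hS k⟩

theorem psi_surj : Function.Surjective (psi e (X := X) (Y := Y)) := by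
  rintro ⟨c, hc⟩
  obtain ⟨g, hgD, hgc⟩ := hc
  have hn : n = p + q := by
    have h1 := Fintype.card_congr e
    simpa using h1
  have cardP : Fintype.card {i : Fin n // (g.1 i).isLeft = true} = p := hgD
  have cardP' : Fintype.card {i : Fin n // ¬ ((g.1 i).isLeft = true)} = q := by
    rw [Fintype.card_subtype_compl, cardP, Fintype.card_fin, hn, Nat.add_sub_cancel_left]
  let a : Fin p ≃ {i : Fin n // (g.1 i).isLeft = true} := (Fintype.equivFinOfCardEq cardP).symm
  let b : Fin q ≃ {i : Fin n // ¬ ((g.1 i).isLeft = true)} :=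
    (Fintype.equivFinOfCardEq cardP').symm
  let g₁ : OrdConf X p := ⟨fun k => (g.1 (a k).1).getLeft (a k).2, by
    intro k k' hkk
    have h2 := congrArg (Sum.inl (β := Y)) hkk
    rw [inl_getLeft, inl_getLeft] at h2
    exact a.injective (Subtype.ext (g.2 h2))⟩
  let g₂ : OrdConf Y q := ⟨fun k => (g.1 (b k).1).getRight (isRight_of_not_isLeft (b k).2), by
    intro k k' hkk
    have h2 := congrArg (Sum.inr (α := X)) hkk
    rw [inr_getRight, inr_getRight] at h2
    exact b.injective (Subtype.ext (g.2 h2))⟩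
  refine ⟨(mkU g₁, mkU g₂), ?_⟩
  refine Subtype.ext ?_
  show mkU (joinConf e g₁ g₂) = c
  rw [← hgc]
  symm
  refine mkU_eq_iff.mpr ⟨e.trans ((a.sumCongr b).trans
    (Equiv.sumCompl fun i : Fin n => (g.1 i).isLeft = true)), fun j => ?_⟩
  show g.1 ((Equiv.sumCompl fun i : Fin n => (g.1 i).isLeft = true)
    ((a.sumCongr b) (e j))) = Sum.map g₁.1 g₂.1 (e j)
  rcases hj : e j with k | k
  · simp only [Equiv.sumCongr_apply, Sum.map_inl, Equiv.sumCompl_apply_inl]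
    exact (inl_getLeft _).symm
  · simp only [Equiv.sumCongr_apply, Sum.map_inr, Equiv.sumCompl_apply_inr]
    exact (inr_getRight _).symm

theorem psi_openMap : IsOpenMap (psi e (X := X) (Y := Y)) := by
  intro W hW
  have hW'open : IsOpen (Prod.map (mkU (X := X) (n := p)) (mkU (X := Y) (n := q)) ⁻¹' W) :=
    hW.preimage qprodQuot.continuous
  have h1 : IsOpen ((joinHomeo e) '' (Prod.map mkU mkU ⁻¹' W)) :=
    (joinHomeo e).isOpenMap _ hW'open
  have h2 : IsOpen (Subtype.val '' ((joinHomeo e) '' (Prod.map mkU mkU ⁻¹' W))) :=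
    (isOpen_patternSet e).isOpenMap_subtype_val _ h1
  have h3 : IsOpen (mkU '' (Subtype.val '' ((joinHomeo e) '' (Prod.map mkU mkU ⁻¹' W)))) :=
    mkU_open _ h2
  have hEq : psi e '' W = Subtype.val ⁻¹'
      (mkU '' (Subtype.val '' ((joinHomeo e) '' (Prod.map mkU mkU ⁻¹' W)))) := by
    ext c
    simp only [Set.mem_image, Set.mem_preimage]
    constructor
    · rintro ⟨w, hwW, hw⟩
      obtain ⟨⟨g₁, g₂⟩, rfl⟩ : ∃ gg : OrdConf X p × OrdConf Y q, Prod.map mkU mkU gg = w := by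
        obtain ⟨gg1, h1'⟩ := Quotient.exists_rep w.1
        obtain ⟨gg2, h2'⟩ := Quotient.exists_rep w.2
        exact ⟨(gg1, gg2), Prod.ext h1' h2'⟩
      refine ⟨joinConf e g₁ g₂, ⟨(joinHomeo e) (g₁, g₂), ⟨(g₁, g₂), hwW, rfl⟩, rfl⟩, ?_⟩
      exact congrArg Subtype.val hw
    · rintro ⟨z, ⟨z', ⟨gg, hggW', rfl⟩, rfl⟩, hzc⟩
      refine ⟨Prod.map mkU mkU gg, hggW', ?_⟩
      refine Subtype.ext ?_
      exact hzc
  rw [hEq]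
  exact h3.preimage continuous_subtype_val

/-- The homeomorphism between the product of configuration spaces and the clopen piece. -/
noncomputable def psiHomeo :
    UConf X p × UConf Y q ≃ₜ ↥(mkU '' {h : OrdConf (X ⊕ Y) n | leftCount h = p}) :=
  Equiv.toHomeomorphOfContinuousOpen
    (Equiv.ofBijective (psi e) ⟨psi_inj e, psi_surj e⟩) (psi_cont e) (psi_openMap e)

/-- Two injective tuples with the same range are permutations of each other. -/
theorem mkU_eq_of_range_eq {g h : OrdConf X n} (hr : Set.range g.1 = Set.range h.1) :
    mkU g = mkU h := by
  refine mkU_eq_iff.mpr ⟨(Equiv.ofInjective h.1 h.2).trans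
    ((Equiv.setCongr hr.symm).trans (Equiv.ofInjective g.1 g.2).symm), fun i => ?_⟩
  have h1 : (Equiv.ofInjective g.1 g.2) ((Equiv.ofInjective g.1 g.2).symm
      ((Equiv.setCongr hr.symm) ((Equiv.ofInjective h.1 h.2) i))) =
      (Equiv.setCongr hr.symm) ((Equiv.ofInjective h.1 h.2) i) :=
    (Equiv.ofInjective g.1 g.2).apply_symm_apply _
  have h2 := congrArg Subtype.val h1
  rw [Equiv.ofInjective_apply] at h2
  exact h2

end Conf

/-- If `Γ = Γ₁ ⊔ Γ₂` and the initial configuration `S` of `n` points has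
`p` particles in `Γ₁` and `q = n - p` particles in `Γ₂`, then
`B_n(Γ, S) ≅ B_p(Γ₁, S ∩ Γ₁) × B_q(Γ₂, S ∩ Γ₂)`. -/
theorem braidGroup_disjointUnion (Γ₁ Γ₂ : Type) [TopologicalSpace Γ₁] [TopologicalSpace Γ₂]
    (n p q : ℕ) (hpq : n = p + q)
    (f : Fin n → Γ₁ ⊕ Γ₂) (hf : Function.Injective f)
    (f₁ : Fin p → Γ₁) (hf₁ : Function.Injective f₁)
    (f₂ : Fin q → Γ₂) (hf₂ : Function.Injective f₂)
    (hsplit : Set.range f = Sum.inl '' Set.range f₁ ∪ Sum.inr '' Set.range f₂) :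
    Nonempty
      (BraidGroupTop (Γ₁ ⊕ Γ₂) n (Quotient.mk (confSetoid _ _) ⟨f, hf⟩) ≃*
        BraidGroupTop Γ₁ p (Quotient.mk (confSetoid _ _) ⟨f₁, hf₁⟩) ×
          BraidGroupTop Γ₂ q (Quotient.mk (confSetoid _ _) ⟨f₂, hf₂⟩)) := by
  classical
  set e : Fin n ≃ Fin p ⊕ Fin q := (finCongr hpq).trans finSumFinEquiv.symm with he
  set fc : OrdConf (Γ₁ ⊕ Γ₂) n := ⟨f, hf⟩ with hfc
  set f₁c : OrdConf Γ₁ p := ⟨f₁, hf₁⟩ with hf₁c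
  set f₂c : OrdConf Γ₂ q := ⟨f₂, hf₂⟩ with hf₂c
  have hrange : Set.range (joinConf e f₁c f₂c).1 = Set.range fc.1 := by
    have h1 : Set.range (joinConf e f₁c f₂c).1 =
        Sum.inl '' Set.range f₁ ∪ Sum.inr '' Set.range f₂ := by
      ext z
      constructor
      · rintro ⟨i, rfl⟩
        show Sum.map f₁ f₂ (e i) ∈ _
        rcases hi : e i with k | k
        · rw [Sum.map_inl]
          exact Or.inl ⟨f₁ k, ⟨k, rfl⟩, rfl⟩
        · rw [Sum.map_inr]
          exact Or.inr ⟨f₂ k, ⟨k, rfl⟩, rfl⟩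
      · rintro (⟨x, ⟨k, rfl⟩, rfl⟩ | ⟨y, ⟨k, rfl⟩, rfl⟩)
        · refine ⟨e.symm (Sum.inl k), ?_⟩
          show Sum.map f₁ f₂ (e (e.symm (Sum.inl k))) = _
          rw [e.apply_symm_apply, Sum.map_inl]
        · refine ⟨e.symm (Sum.inr k), ?_⟩
          show Sum.map f₁ f₂ (e (e.symm (Sum.inr k))) = _
          rw [e.apply_symm_apply, Sum.map_inr]
    rw [h1]
    exact hsplit.symm
  have hjoin : mkU (joinConf e f₁c f₂c) = mkU fc := mkU_eq_of_range_eq hrange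
  have hc : mkU fc ∈ mkU '' {h : OrdConf (Γ₁ ⊕ Γ₂) n | leftCount h = p} :=
    ⟨joinConf e f₁c f₂c, leftCount_joinConf e f₁c f₂c, hjoin⟩
  have E2 := fgHomeo (psiHomeo e).symm ⟨mkU fc, hc⟩
  have hbase : (psiHomeo e).symm ⟨mkU fc, hc⟩ = (mkU f₁c, mkU f₂c) := by
    have h5 : psiHomeo e (mkU f₁c, mkU f₂c) = ⟨mkU fc, hc⟩ := Subtype.ext hjoin
    rw [← h5, Homeomorph.symm_apply_apply]
  rw [hbase] at E2
  exact ⟨((fgClopen isClopen_Cset hc).symm.trans E2).trans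
    (fgProd (UConf Γ₁ p) (UConf Γ₂ q) (mkU f₁c) (mkU f₂c))⟩
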